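/- Let v ∈ [0,1]^Q with v ⪯ m (the value vector), and let s_A be a positional Player A strategy that locally dominates v. Assume that every end component H = (Q_H, β) of the MDP induced by s_A with Q_H ≠ {⊤} satisfies val(q_H) = 0 for every q_H ∈ Q_H. Then s_A guarantees v: for every state q ∈ Q, val(s_A)(q) ≥ v(q). -/

import Mathlib

open scoped BigOperators Classical

noncomputable section

/-- A probability distribution on a finite type. -/
def FDist (X : Type) [Fintype X] : Type :=
  { p : X → ℝ // (∀ x, 0 ≤ p x) ∧ ∑ x, p x = 1 }

namespace CRG

variable {A B Q D : Type} [Fintype A] [Fintype B] [Fintype Q] [Fintype D]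

/-- The support of a distribution. -/
def supp {X : Type} [Fintype X] (σ : FDist X) : Set X := { x | σ.1 x ≠ 0 }

/-- The Dirac distribution. -/
def dirac {X : Type} [Fintype X] [DecidableEq X] (x : X) : FDist X :=
  ⟨fun y => if y = x then 1 else 0, by
    constructor
    · intro y
      dsimp only
      split <;> norm_num
    · simp⟩

/-- Outcome of a pair of mixed strategies in the game in normal form with payoff `u`. -/
def out (u : A → B → ℝ) (σA : FDist A) (σB : FDist B) : ℝ :=
  ∑ a, ∑ b, σA.1 a * σB.1 b * u a b

/-- Outcome of a mixed strategy of Player A against a pure action of Player B. -/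
def outB (u : A → B → ℝ) (σA : FDist A) (b : B) : ℝ :=
  ∑ a, σA.1 a * u a b

/-- The value of a Player A mixed strategy in a game in normal form. -/
def valStratGF (u : A → B → ℝ) (σA : FDist A) : ℝ :=
  ⨅ σB : FDist B, out u σA σB

/-- The (von Neumann) value of a finite game in normal form. -/
def valGF (u : A → B → ℝ) : ℝ :=
  ⨆ σA : FDist A, valStratGF u σA

/-- The optimal Player A mixed strategies in a game in normal form. -/
def OptA (u : A → B → ℝ) : Set (FDist A) := { σA | valStratGF u σA = valGF u }

/-- The optimal actions of Player B against the Player A mixed strategy `σA`. -/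
def optActs (u : A → B → ℝ) (σA : FDist A) : Set B :=
  { b | outB u σA b = valStratGF u σA }

/-- μ_v : the lift of a valuation of the states to the Nature states. -/
def lift (dist : D → FDist Q) (v : Q → ℝ) (d : D) : ℝ := ∑ q, (dist d).1 q * v q

/-- The payoff function of the local interaction `F_q` valued by `μ_m`. -/
def locPay (δ : Q → A → B → D) (dist : D → FDist Q) (m : Q → ℝ) (q : Q) : A → B → ℝ :=
  fun a b => lift dist m (δ q a b)

/-- One-step transition probability between states. -/
def step (δ : Q → A → B → D) (dist : D → FDist Q) (σA : FDist A) (σB : FDist B)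
    (q q' : Q) : ℝ :=
  ∑ a, ∑ b, σA.1 a * σB.1 b * (dist (δ q a b)).1 q'

/-- The operator Δ on valuations of the states. -/
def Δop (δ : Q → A → B → D) (dist : D → FDist Q) (T : Q) (v : Q → ℝ) : Q → ℝ :=
  fun q => if q = T then 1 else valGF (fun a b => lift dist v (δ q a b))

/-- The target `T` is an absorbing (self-looping) sink. -/
def Absorbing (δ : Q → A → B → D) (dist : D → FDist Q) (T : Q) : Prop :=
  ∀ a b, (dist (δ T a b)).1 = fun q => if q = T then 1 else 0

/-- `m` is the least fixed point of Δ on `[0,1]^Q`. -/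
def IsLfpDelta (δ : Q → A → B → D) (dist : D → FDist Q) (T : Q) (m : Q → ℝ) : Prop :=
  (∀ q, m q ∈ Set.Icc (0:ℝ) 1) ∧ Δop δ dist T m = m ∧
    ∀ v : Q → ℝ, (∀ q, v q ∈ Set.Icc (0:ℝ) 1) → Δop δ dist T v = v → ∀ q, m q ≤ v q

/-- A strategy: a history of past states together with the current state gives a
mixed action.  (This encodes maps `Q⁺ → 𝒟(X)`.) -/
def Strat (Q X : Type) [Fintype X] : Type := List Q → Q → FDist X

/-- Residual strategy after the history `π` has been played. -/
def residual {X : Type} [Fintype X] (s : Strat Q X) (π : List Q) : Strat Q X :=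
  fun h q => s (π ++ h) q

/-- The (positional) strategy associated with a per-state choice of mixed actions. -/
def ofPos {X : Type} [Fintype X] (s : Q → FDist X) : Strat Q X := fun _ q => s q

/-- Probability of reaching the set `S` within `n` steps from current state `q`,
history `h` having been played. -/
def reachSetNAux (δ : Q → A → B → D) (dist : D → FDist Q) (S : Set Q) :
    ℕ → Strat Q A → Strat Q B → List Q → Q → ℝ
  | 0, _, _, _, q => if q ∈ S then 1 else 0
  | n + 1, sA, sB, h, q =>
      if q ∈ S then 1
      else ∑ q', step δ dist (sA h q) (sB h q) q q' *
        reachSetNAux δ dist S n sA sB (h ++ [q]) q'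

/-- Probability of reaching the set `S` within `n` steps from state `q`. -/
def reachSetN (δ : Q → A → B → D) (dist : D → FDist Q) (S : Set Q) (n : ℕ)
    (sA : Strat Q A) (sB : Strat Q B) (q : Q) : ℝ :=
  reachSetNAux δ dist S n sA sB [] q

/-- Probability of reaching the target `T` within `n` steps from state `q`. -/
def reachN (δ : Q → A → B → D) (dist : D → FDist Q) (T : Q) (n : ℕ)
    (sA : Strat Q A) (sB : Strat Q B) (q : Q) : ℝ :=
  reachSetN δ dist {T} n sA sB q

/-- Probability of eventually reaching the target `T` from state `q`. -/
def reach (δ : Q → A → B → D) (dist : D → FDist Q) (T : Q)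
    (sA : Strat Q A) (sB : Strat Q B) (q : Q) : ℝ :=
  ⨆ n : ℕ, reachN δ dist T n sA sB q

/-- The value of a Player A strategy from state `q`. -/
def valA (δ : Q → A → B → D) (dist : D → FDist Q) (T : Q) (sA : Strat Q A) (q : Q) : ℝ :=
  ⨅ sB : Strat Q B, reach δ dist T sA sB q

/-- The value of the game from state `q`. -/
def value (δ : Q → A → B → D) (dist : D → FDist Q) (T : Q) (q : Q) : ℝ :=
  ⨆ sA : Strat Q A, valA δ dist T sA q

/-- A state is maximizable when Player A has an optimal strategy from it. -/
def Maximizable (δ : Q → A → B → D) (dist : D → FDist Q) (T q : Q) : Prop :=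
  ∃ sA : Strat Q A, valA δ dist T sA q = value δ dist T q

/-- A positional Player A strategy locally dominates the valuation `v`. -/
def LocallyDominates (δ : Q → A → B → D) (dist : D → FDist Q)
    (sA : Q → FDist A) (v : Q → ℝ) : Prop :=
  ∀ q, v q ≤ valStratGF (fun a b => lift dist v (δ q a b)) (sA q)

/-- Transition function ι of the MDP induced by a positional Player A strategy. -/
def stepB [DecidableEq B] (δ : Q → A → B → D) (dist : D → FDist Q)
    (sA : Q → FDist A) (q : Q) (b : B) (q' : Q) : ℝ :=
  step δ dist (sA q) (dirac b) q q'

/-- An end component of the MDP induced by the positional Player A strategy `sA`. -/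
structure EndComp [DecidableEq B] (δ : Q → A → B → D) (dist : D → FDist Q)
    (sA : Q → FDist A) where
  states : Set Q
  acts : Q → Set B
  acts_nonempty : ∀ q ∈ states, (acts q).Nonempty
  closed : ∀ q ∈ states, ∀ b ∈ acts q, ∀ q', stepB δ dist sA q b q' ≠ 0 → q' ∈ states
  connected : ∀ q ∈ states, ∀ q' ∈ states,
    Relation.ReflTransGen
      (fun x y => x ∈ states ∧ ∃ b ∈ acts x, stepB δ dist sA x b y ≠ 0) q q'

/-- `S_D` : the Nature states having a non-zero probability to reach `S`. -/
def natS (dist : D → FDist Q) (S : Set Q) : Set D :=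
  { d | ∃ q ∈ S, (dist d).1 q ≠ 0 }

/-- Progressive optimal local strategies at `q` w.r.t. the set `Gd`. -/
def Prog (δ : Q → A → B → D) (dist : D → FDist Q) (m : Q → ℝ) (q : Q)
    (Gd : Set Q) : Set (FDist A) :=
  { σA | σA ∈ OptA (locPay δ dist m q) ∧
      ∀ b ∈ optActs (locPay δ dist m q) σA, ∃ a ∈ supp σA, δ q a b ∈ natS dist Gd }

/-- Risky optimal local strategies at `q` w.r.t. the set `Bd`. -/
def Risk (δ : Q → A → B → D) (dist : D → FDist Q) (m : Q → ℝ) (q : Q)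
    (Bd : Set Q) : Set (FDist A) :=
  { σA | σA ∈ OptA (locPay δ dist m q) ∧
      ∃ b ∈ optActs (locPay δ dist m q) σA, ∃ a ∈ supp σA, δ q a b ∈ natS dist Bd }

/-- Efficient local strategies: progressive and not risky. -/
def Eff (δ : Q → A → B → D) (dist : D → FDist Q) (m : Q → ℝ) (q : Q)
    (Gd Bd : Set Q) : Set (FDist A) :=
  Prog δ dist m q Gd \ Risk δ dist m q Bd

/-- The increasing sequence of sets of secure states w.r.t. `Bd`. -/
def SecN (δ : Q → A → B → D) (dist : D → FDist Q) (m : Q → ℝ) (T : Q) (Bd : Set Q) :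
    ℕ → Set Q
  | 0 => {T}
  | n + 1 => SecN δ dist m T Bd n ∪
      { q | q ∉ Bd ∧ (Eff δ dist m q (SecN δ dist m T Bd n) Bd).Nonempty }

/-- The set of secure states w.r.t. `Bd`. -/
def Sec (δ : Q → A → B → D) (dist : D → FDist Q) (m : Q → ℝ) (T : Q) (Bd : Set Q) :
    Set Q :=
  (⋃ n : ℕ, SecN δ dist m T Bd n) ∪ { q | m q = 0 }

/-- The sequence of sets of bad states. -/
def BadN (δ : Q → A → B → D) (dist : D → FDist Q) (m : Q → ℝ) (T : Q) : ℕ → Set Q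
  | 0 => ∅
  | n + 1 => (Sec δ dist m T (BadN δ dist m T n))ᶜ

/-- The set of bad states. -/
def Bad (δ : Q → A → B → D) (dist : D → FDist Q) (m : Q → ℝ) (T : Q) : Set Q :=
  BadN δ dist m T (Fintype.card Q)

/-- `α[y]` : the total valuation extending the partial valuation `α : O∖E → [0,1]`
with the value `y` on `E`. -/
def extendVal {O : Type} (E : Set O) (α : O → ℝ) (y : ℝ) : O → ℝ :=
  fun o => if o ∈ E then y else α o

/-- The map `f_α : y ↦ val_{⟨F, α[y]⟩}`. -/
def fval {O : Type} (ρ : A → B → O) (E : Set O) (α : O → ℝ) (y : ℝ) : ℝ :=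
  valGF (fun a b => extendVal E α y (ρ a b))

/-- `v` is the least fixed point of `f_α` on `[0,1]`. -/
def IsLfpVal {O : Type} (ρ : A → B → O) (E : Set O) (α : O → ℝ) (v : ℝ) : Prop :=
  v ∈ Set.Icc (0:ℝ) 1 ∧ fval ρ E α v = v ∧
    ∀ y ∈ Set.Icc (0:ℝ) 1, fval ρ E α y = y → v ≤ y

/-- The game form `ρ` is reach-maximizable w.r.t. the partial valuation `α : O∖E → [0,1]`. -/
def RMwrt {O : Type} (ρ : A → B → O) (E : Set O) (α : O → ℝ) : Prop :=
  ∀ v : ℝ, IsLfpVal ρ E α v →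
    v = 0 ∨
      ∃ σA ∈ OptA (fun a b => extendVal E α v (ρ a b)),
        ∀ b ∈ optActs (fun a b => extendVal E α v (ρ a b)) σA,
          ∃ a ∈ supp σA, ρ a b ∉ E

/-- A reach-maximizable game form: RM w.r.t. every partial valuation of its outcomes. -/
def RMform {O : Type} (ρ : A → B → O) : Prop :=
  ∀ (E : Set O) (α : O → ℝ), (∀ o ∉ E, α o ∈ Set.Icc (0:ℝ) 1) → RMwrt ρ E α

/-- A determined game form. -/
def Determined {O : Type} (ρ : A → B → O) : Prop :=
  ∀ E : Set O, (∃ a, ∀ b, ρ a b ∈ E) ∨ (∃ b, ∀ a, ρ a b ∉ E)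

/-- Transition function of the three-state reachability game `C_{(F,α)}`:
state `0` is `q₀`, state `1` is the target `⊤`, state `2` is the bin `⊥`. -/
def triδ {O : Type} (ρ : A → B → O) (E : Set O) :
    Fin 3 → A → B → (Fin 3 ⊕ {o : O // o ∉ E}) :=
  fun s a b =>
    if s = 0 then
      if h : ρ a b ∈ E then Sum.inl 0 else Sum.inr ⟨ρ a b, h⟩
    else Sum.inl s

/-- Nature distributions of the three-state reachability game `C_{(F,α)}`. -/
def triDist {O : Type} (E : Set O) (α : O → ℝ)
    (hα : ∀ o ∉ E, α o ∈ Set.Icc (0:ℝ) 1) :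
    (Fin 3 ⊕ {o : O // o ∉ E}) → FDist (Fin 3) := fun d =>
  match d with
  | Sum.inl t => dirac t
  | Sum.inr x =>
      ⟨![0, α x.1, 1 - α x.1], by
        obtain ⟨h0, h1⟩ := hα x.1 x.2
        constructor
        · intro s
          fin_cases s <;> simp <;> linarith
        · simp [Fin.sum_univ_three]⟩

/-- An abstract (finite) game form with actions `A` and `B`. -/
structure GameForm (A B : Type) where
  O : Type
  fin : Fintype O
  ρ : A → B → O

/-- All local interactions of the arena `δ` belong to the set `𝒢` of game forms
(up to a renaming of the outcomes into Nature states). -/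
def UsesForms {Q D : Type} (𝒢 : Set (GameForm A B)) (δ : Q → A → B → D) : Prop :=
  ∀ q, ∃ F ∈ 𝒢, ∃ g : F.O → D, δ q = fun a b => g (F.ρ a b)

/-- The sequence of iterates of Δ starting from the valuation `1_{⊤}`. -/
def vseq (δ : Q → A → B → D) (dist : D → FDist Q) (T : Q) : ℕ → Q → ℝ
  | 0 => fun q => if q = T then 1 else 0
  | n + 1 => Δop δ dist T (vseq δ dist T n)

/-- Relevant paths w.r.t. the strategy `sA` from the state `q₀`: the pair `(h, q)`
encodes the path `h · q` (history `h`, current state `q`). -/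
inductive Relevant [DecidableEq B] (δ : Q → A → B → D) (dist : D → FDist Q)
    (m : Q → ℝ) (sA : Strat Q A) (q₀ : Q) : List Q → Q → Prop
  | base : Relevant δ dist m sA q₀ [] q₀
  | step {h : List Q} {q q' : Q} :
      Relevant δ dist m sA q₀ h q →
      (∃ b ∈ optActs (locPay δ dist m q) (sA h q),
        0 < CRG.step δ dist (sA h q) (dirac b) q q') →
      Relevant δ dist m sA q₀ (h ++ [q]) q'

end CRG

namespace CRG

variable {A B Q D : Type} [Fintype A] [Fintype B] [Fintype Q] [Fintype D]

lemma FDist.nonneg {X : Type} [Fintype X] (σ : FDist X) (x : X) : 0 ≤ σ.1 x := σ.2.1 x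

lemma FDist.sum_one {X : Type} [Fintype X] (σ : FDist X) : ∑ x, σ.1 x = 1 := σ.2.2

lemma FDist.le_one {X : Type} [Fintype X] (σ : FDist X) (x : X) : σ.1 x ≤ 1 := by
  have h := Finset.single_le_sum (f := σ.1) (fun y _ => σ.2.1 y) (Finset.mem_univ x)
  rw [σ.2.2] at h; exact h

instance FDist.instNonempty {X : Type} [Fintype X] [Nonempty X] : Nonempty (FDist X) :=
  ⟨dirac (Classical.arbitrary X)⟩

instance {X : Type} [Fintype X] [Nonempty X] : Nonempty (Strat Q X) :=
  ⟨fun _ _ => Classical.arbitrary _⟩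

lemma sum_sum_weights (σA : FDist A) (σB : FDist B) :
    ∑ a, ∑ b, σA.1 a * σB.1 b = 1 := by
  simp only [← Finset.mul_sum, FDist.sum_one, mul_one, FDist.sum_one]

/-- Payoffs in `[0,1]`. -/
def PayIcc (u : A → B → ℝ) : Prop := ∀ a b, u a b ∈ Set.Icc (0:ℝ) 1

lemma out_nonneg {u : A → B → ℝ} (hu : PayIcc u) (σA : FDist A) (σB : FDist B) :
    0 ≤ out u σA σB := by
  refine Finset.sum_nonneg fun a _ => Finset.sum_nonneg fun b _ => ?_
  exact mul_nonneg (mul_nonneg (σA.2.1 a) (σB.2.1 b)) (hu a b).1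

lemma out_le_out_add {u u' : A → B → ℝ} {c : ℝ}
    (h : ∀ a b, u a b ≤ u' a b + c) (σA : FDist A) (σB : FDist B) :
    out u σA σB ≤ out u' σA σB + c := by
  have : out u σA σB ≤ ∑ a, ∑ b, σA.1 a * σB.1 b * (u' a b + c) := by
    refine Finset.sum_le_sum fun a _ => Finset.sum_le_sum fun b _ => ?_
    exact mul_le_mul_of_nonneg_left (h a b) (mul_nonneg (σA.2.1 a) (σB.2.1 b))
  refine this.trans (le_of_eq ?_)
  have : ∑ a, ∑ b, σA.1 a * σB.1 b * (u' a b + c)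
      = out u' σA σB + (∑ a, ∑ b, σA.1 a * σB.1 b) * c := by
    simp only [out, Finset.sum_mul, ← Finset.sum_add_distrib]
    exact Finset.sum_congr rfl fun a _ => Finset.sum_congr rfl fun b _ => by ring
  rw [this, sum_sum_weights, one_mul]

lemma out_le_one {u : A → B → ℝ} (hu : PayIcc u) (σA : FDist A) (σB : FDist B) :
    out u σA σB ≤ 1 := by
  have := out_le_out_add (u := u) (u' := fun _ _ => 0) (c := 1)
    (fun a b => by simpa using (hu a b).2) σA σB
  simpa [out] using this

lemma bddBelow_out {u : A → B → ℝ} (hu : PayIcc u) (σA : FDist A) :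
    BddBelow (Set.range fun σB : FDist B => out u σA σB) :=
  ⟨0, by rintro x ⟨σB, rfl⟩; exact out_nonneg hu σA σB⟩

lemma valStratGF_le_out [Nonempty B] {u : A → B → ℝ} (hu : PayIcc u)
    (σA : FDist A) (σB : FDist B) : valStratGF u σA ≤ out u σA σB :=
  ciInf_le (bddBelow_out hu σA) σB

lemma le_valStratGF [Nonempty B] {u : A → B → ℝ} {σA : FDist A} {c : ℝ}
    (h : ∀ σB, c ≤ out u σA σB) : c ≤ valStratGF u σA := le_ciInf h

lemma valStratGF_nonneg [Nonempty B] {u : A → B → ℝ} (hu : PayIcc u) (σA : FDist A) :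
    0 ≤ valStratGF u σA := le_valStratGF fun σB => out_nonneg hu σA σB

lemma valStratGF_le_one [Nonempty B] {u : A → B → ℝ} (hu : PayIcc u) (σA : FDist A) :
    valStratGF u σA ≤ 1 :=
  (valStratGF_le_out hu σA (Classical.arbitrary _)).trans
    (out_le_one hu σA (Classical.arbitrary _))

lemma bddAbove_valStratGF [Nonempty B] {u : A → B → ℝ} (hu : PayIcc u) :
    BddAbove (Set.range fun σA : FDist A => valStratGF u σA) :=
  ⟨1, by rintro x ⟨σA, rfl⟩; exact valStratGF_le_one hu σA⟩

lemma valStratGF_le_valGF [Nonempty A] [Nonempty B] {u : A → B → ℝ} (hu : PayIcc u)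
    (σA : FDist A) : valStratGF u σA ≤ valGF u :=
  le_ciSup (bddAbove_valStratGF hu) σA

lemma valGF_le [Nonempty A] [Nonempty B] {u : A → B → ℝ} {c : ℝ}
    (h : ∀ σA, valStratGF u σA ≤ c) : valGF u ≤ c := ciSup_le h

lemma valGF_nonneg [Nonempty A] [Nonempty B] {u : A → B → ℝ} (hu : PayIcc u) :
    0 ≤ valGF u :=
  (valStratGF_nonneg hu (Classical.arbitrary _)).trans
    (valStratGF_le_valGF hu (Classical.arbitrary _))

lemma valGF_le_one [Nonempty A] [Nonempty B] {u : A → B → ℝ} (hu : PayIcc u) :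
    valGF u ≤ 1 := valGF_le fun σA => valStratGF_le_one hu σA

lemma valStratGF_le_valStratGF_add [Nonempty B] {u u' : A → B → ℝ} {c : ℝ}
    (hu : PayIcc u) (h : ∀ a b, u a b ≤ u' a b + c) (σA : FDist A) :
    valStratGF u σA ≤ valStratGF u' σA + c := by
  have : valStratGF u σA - c ≤ valStratGF u' σA := by
    refine le_valStratGF fun σB => ?_
    have h1 : valStratGF u σA ≤ out u σA σB := valStratGF_le_out hu σA σB
    linarith [out_le_out_add h σA σB]
  linarith

lemma valGF_le_valGF_add [Nonempty A] [Nonempty B] {u u' : A → B → ℝ} {c : ℝ}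
    (hu : PayIcc u) (hu' : PayIcc u') (h : ∀ a b, u a b ≤ u' a b + c) :
    valGF u ≤ valGF u' + c :=
  valGF_le fun σA => (valStratGF_le_valStratGF_add hu h σA).trans
    (by linarith [valStratGF_le_valGF hu' σA])

lemma lift_mem_Icc (dist : D → FDist Q) {v : Q → ℝ} (hv : ∀ q, v q ∈ Set.Icc (0:ℝ) 1)
    (d : D) : lift dist v d ∈ Set.Icc (0:ℝ) 1 := by
  constructor
  · exact Finset.sum_nonneg fun q _ => mul_nonneg ((dist d).2.1 q) (hv q).1
  · calc ∑ q, (dist d).1 q * v q ≤ ∑ q, (dist d).1 q * 1 :=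
        Finset.sum_le_sum fun q _ => mul_le_mul_of_nonneg_left (hv q).2 ((dist d).2.1 q)
    _ = 1 := by simp [FDist.sum_one]

lemma lift_le_lift_add (dist : D → FDist Q) {v v' : Q → ℝ} {c : ℝ}
    (h : ∀ q, v q ≤ v' q + c) (d : D) : lift dist v d ≤ lift dist v' d + c := by
  have : ∑ q, (dist d).1 q * v q ≤ ∑ q, ((dist d).1 q * v' q + (dist d).1 q * c) := by
    refine Finset.sum_le_sum fun q _ => ?_
    have := mul_le_mul_of_nonneg_left (h q) ((dist d).2.1 q)
    linarith [this, mul_add ((dist d).1 q) (v' q) c]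
  rw [Finset.sum_add_distrib, ← Finset.sum_mul, FDist.sum_one, one_mul] at this
  exact this

lemma step_nonneg (δ : Q → A → B → D) (dist : D → FDist Q) (σA : FDist A)
    (σB : FDist B) (q q' : Q) : 0 ≤ step δ dist σA σB q q' :=
  Finset.sum_nonneg fun a _ => Finset.sum_nonneg fun b _ =>
    mul_nonneg (mul_nonneg (σA.2.1 a) (σB.2.1 b)) ((dist (δ q a b)).2.1 q')

lemma step_sum_one (δ : Q → A → B → D) (dist : D → FDist Q) (σA : FDist A)
    (σB : FDist B) (q : Q) : ∑ q', step δ dist σA σB q q' = 1 := by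
  unfold step
  rw [Finset.sum_comm]
  have : ∀ a, ∑ q', ∑ b, σA.1 a * σB.1 b * (dist (δ q a b)).1 q'
      = ∑ b, σA.1 a * σB.1 b := by
    intro a
    rw [Finset.sum_comm]
    refine Finset.sum_congr rfl fun b _ => ?_
    rw [← Finset.mul_sum, FDist.sum_one, mul_one]
  simp only [this]
  exact sum_sum_weights σA σB

/-- The key Fubini-type rearrangement. -/
lemma sum_step_mul (δ : Q → A → B → D) (dist : D → FDist Q) (σA : FDist A)
    (σB : FDist B) (q : Q) (w : Q → ℝ) :
    ∑ q', step δ dist σA σB q q' * w q'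
      = out (fun a b => lift dist w (δ q a b)) σA σB := by
  unfold step out lift
  simp only [Finset.sum_mul]
  rw [Finset.sum_comm]
  refine Finset.sum_congr rfl fun a _ => ?_
  rw [Finset.sum_comm]
  refine Finset.sum_congr rfl fun b _ => ?_
  rw [Finset.mul_sum]
  exact Finset.sum_congr rfl fun q' _ => by ring

lemma out_dirac (u : A → B → ℝ) (σA : FDist A) (b : B) :
    out u σA (dirac b) = ∑ a, σA.1 a * u a b := by
  unfold out dirac
  refine Finset.sum_congr rfl fun a _ => ?_
  rw [Finset.sum_eq_single b] <;> simp +contextual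

variable [DecidableEq B]

lemma stepB_nonneg (δ : Q → A → B → D) (dist : D → FDist Q) (sA : Q → FDist A)
    (q : Q) (b : B) (q' : Q) : 0 ≤ stepB δ dist sA q b q' :=
  step_nonneg δ dist _ _ q q'

lemma stepB_sum_one (δ : Q → A → B → D) (dist : D → FDist Q) (sA : Q → FDist A)
    (q : Q) (b : B) : ∑ q', stepB δ dist sA q b q' = 1 :=
  step_sum_one δ dist _ _ q

lemma sum_stepB_mul (δ : Q → A → B → D) (dist : D → FDist Q) (sA : Q → FDist A)
    (q : Q) (b : B) (w : Q → ℝ) :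
    ∑ q', stepB δ dist sA q b q' * w q'
      = out (fun a b => lift dist w (δ q a b)) (sA q) (dirac b) :=
  sum_step_mul δ dist _ _ q w

/-- Decompose a mixed step over Player B pure actions. -/
lemma step_eq_sum_stepB (δ : Q → A → B → D) (dist : D → FDist Q) (sA : Q → FDist A)
    (σB : FDist B) (q q' : Q) :
    step δ dist (sA q) σB q q' = ∑ b, σB.1 b * stepB δ dist sA q b q' := by
  unfold stepB step dirac
  rw [Finset.sum_comm]
  refine Finset.sum_congr rfl fun b _ => ?_
  rw [Finset.mul_sum]
  refine Finset.sum_congr rfl fun a _ => ?_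
  rw [Finset.sum_eq_single b] <;> simp +contextual <;> intros <;> ring

lemma reachSetNAux_nonneg (δ : Q → A → B → D) (dist : D → FDist Q) (S : Set Q) :
    ∀ (n : ℕ) (sA : Strat Q A) (sB : Strat Q B) (h : List Q) (q : Q),
      0 ≤ reachSetNAux δ dist S n sA sB h q := by
  intro n
  induction n with
  | zero => intro sA sB h q; by_cases hq : q ∈ S <;> simp [reachSetNAux, hq]
  | succ n ih =>
    intro sA sB h q
    by_cases hq : q ∈ S <;> simp only [reachSetNAux, hq, if_true, if_false]
    · norm_num
    · exact Finset.sum_nonneg fun q' _ =>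
        mul_nonneg (step_nonneg δ dist _ _ q q') (ih sA sB (h ++ [q]) q')

lemma reachSetNAux_le_one (δ : Q → A → B → D) (dist : D → FDist Q) (S : Set Q) :
    ∀ (n : ℕ) (sA : Strat Q A) (sB : Strat Q B) (h : List Q) (q : Q),
      reachSetNAux δ dist S n sA sB h q ≤ 1 := by
  intro n
  induction n with
  | zero => intro sA sB h q; by_cases hq : q ∈ S <;> simp [reachSetNAux, hq]
  | succ n ih =>
    intro sA sB h q
    by_cases hq : q ∈ S
    · simp [reachSetNAux, hq]
    · simp only [reachSetNAux, hq, if_false]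
      calc ∑ q', step δ dist (sA h q) (sB h q) q q' * reachSetNAux δ dist S n sA sB (h ++ [q]) q'
          ≤ ∑ q', step δ dist (sA h q) (sB h q) q q' * 1 := by
            refine Finset.sum_le_sum fun q' _ => ?_
            exact mul_le_mul_of_nonneg_left (ih sA sB (h ++ [q]) q')
              (step_nonneg δ dist _ _ q q')
        _ = 1 := by simp [step_sum_one]

lemma reachSetNAux_mono (δ : Q → A → B → D) (dist : D → FDist Q) (S : Set Q) :
    ∀ (n : ℕ) (sA : Strat Q A) (sB : Strat Q B) (h : List Q) (q : Q),
      reachSetNAux δ dist S n sA sB h q ≤ reachSetNAux δ dist S (n + 1) sA sB h q := by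
  intro n
  induction n with
  | zero =>
    intro sA sB h q
    by_cases hq : q ∈ S
    · simp [reachSetNAux, hq]
    · simp only [reachSetNAux, hq, if_false]
      exact Finset.sum_nonneg fun q' _ => mul_nonneg (step_nonneg δ dist _ _ q q')
        (reachSetNAux_nonneg δ dist S 0 sA sB (h ++ [q]) q')
  | succ n ih =>
    intro sA sB h q
    by_cases hq : q ∈ S
    · simp [reachSetNAux, hq]
    · simp only [reachSetNAux, hq, if_false]
      refine Finset.sum_le_sum fun q' _ => ?_
      exact mul_le_mul_of_nonneg_left (ih sA sB (h ++ [q]) q') (step_nonneg δ dist _ _ q q')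

lemma reachSetNAux_monotone (δ : Q → A → B → D) (dist : D → FDist Q) (S : Set Q)
    (sA : Strat Q A) (sB : Strat Q B) (h : List Q) (q : Q) :
    Monotone fun n => reachSetNAux δ dist S n sA sB h q :=
  monotone_nat_of_le_succ fun n => reachSetNAux_mono δ dist S n sA sB h q

lemma reachSetNAux_shift (δ : Q → A → B → D) (dist : D → FDist Q) (S : Set Q)
    (sA : Strat Q A) (sB : Strat Q B) (h0 : List Q) :
    ∀ (n : ℕ) (h : List Q) (q : Q),
      reachSetNAux δ dist S n sA sB (h0 ++ h) q
        = reachSetNAux δ dist S n (residual sA h0) (residual sB h0) h q := by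
  intro n
  induction n with
  | zero => intro h q; by_cases hq : q ∈ S <;> simp [reachSetNAux, hq]
  | succ n ih =>
    intro h q
    by_cases hq : q ∈ S <;> simp only [reachSetNAux, hq, if_true, if_false]
    refine Finset.sum_congr rfl fun q' _ => ?_
    have : h0 ++ h ++ [q] = h0 ++ (h ++ [q]) := by simp [List.append_assoc]
    rw [this, ih (h ++ [q]) q']
    rfl

lemma reachSetNAux_congr (δ : Q → A → B → D) (dist : D → FDist Q) (S : Set Q)
    {sA sA' : Strat Q A} {sB sB' : Strat Q B} :
    ∀ (n : ℕ) (h : List Q) (q : Q),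
      sA h q = sA' h q → sB h q = sB' h q →
      (∀ t r, sA (h ++ q :: t) r = sA' (h ++ q :: t) r) →
      (∀ t r, sB (h ++ q :: t) r = sB' (h ++ q :: t) r) →
      reachSetNAux δ dist S n sA sB h q = reachSetNAux δ dist S n sA' sB' h q := by
  intro n
  induction n with
  | zero => intro h q _ _ _ _; rfl
  | succ n ih =>
    intro h q hA hB hA' hB'
    by_cases hq : q ∈ S <;> simp only [reachSetNAux, hq, if_true, if_false]
    rw [hA, hB]
    refine Finset.sum_congr rfl fun q' _ => ?_
    congr 1
    refine ih (h ++ [q]) q' ?_ ?_ ?_ ?_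
    · simpa using hA' [] q'
    · simpa using hB' [] q'
    · intro t r
      have : h ++ [q] ++ q' :: t = h ++ q :: (q' :: t) := by simp
      rw [this]; exact hA' (q' :: t) r
    · intro t r
      have : h ++ [q] ++ q' :: t = h ++ q :: (q' :: t) := by simp
      rw [this]; exact hB' (q' :: t) r

lemma reachN_nonneg (δ : Q → A → B → D) (dist : D → FDist Q) (T : Q) (n : ℕ)
    (sA : Strat Q A) (sB : Strat Q B) (q : Q) : 0 ≤ reachN δ dist T n sA sB q :=
  reachSetNAux_nonneg δ dist {T} n sA sB [] q

lemma reachN_le_one (δ : Q → A → B → D) (dist : D → FDist Q) (T : Q) (n : ℕ)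
    (sA : Strat Q A) (sB : Strat Q B) (q : Q) : reachN δ dist T n sA sB q ≤ 1 :=
  reachSetNAux_le_one δ dist {T} n sA sB [] q

lemma reachN_monotone (δ : Q → A → B → D) (dist : D → FDist Q) (T : Q)
    (sA : Strat Q A) (sB : Strat Q B) (q : Q) :
    Monotone fun n => reachN δ dist T n sA sB q :=
  reachSetNAux_monotone δ dist {T} sA sB [] q

lemma bddAbove_reachN (δ : Q → A → B → D) (dist : D → FDist Q) (T : Q)
    (sA : Strat Q A) (sB : Strat Q B) (q : Q) :
    BddAbove (Set.range fun n => reachN δ dist T n sA sB q) :=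
  ⟨1, by rintro x ⟨n, rfl⟩; exact reachN_le_one δ dist T n sA sB q⟩

lemma reachN_le_reach (δ : Q → A → B → D) (dist : D → FDist Q) (T : Q) (n : ℕ)
    (sA : Strat Q A) (sB : Strat Q B) (q : Q) :
    reachN δ dist T n sA sB q ≤ reach δ dist T sA sB q :=
  le_ciSup (bddAbove_reachN δ dist T sA sB q) n

lemma reach_nonneg (δ : Q → A → B → D) (dist : D → FDist Q) (T : Q)
    (sA : Strat Q A) (sB : Strat Q B) (q : Q) : 0 ≤ reach δ dist T sA sB q :=
  (reachN_nonneg δ dist T 0 sA sB q).trans (reachN_le_reach δ dist T 0 sA sB q)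

lemma reach_le_one (δ : Q → A → B → D) (dist : D → FDist Q) (T : Q)
    (sA : Strat Q A) (sB : Strat Q B) (q : Q) : reach δ dist T sA sB q ≤ 1 :=
  ciSup_le fun n => reachN_le_one δ dist T n sA sB q

lemma reach_target (δ : Q → A → B → D) (dist : D → FDist Q) (T : Q)
    (sA : Strat Q A) (sB : Strat Q B) : reach δ dist T sA sB T = 1 := by
  refine le_antisymm (reach_le_one δ dist T sA sB T) ?_
  have : reachN δ dist T 0 sA sB T = 1 := by
    simp [reachN, reachSetN, reachSetNAux]
  rw [← this]; exact reachN_le_reach δ dist T 0 sA sB T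

/-- Exchange a finite sum and a supremum of monotone bounded sequences. -/
lemma ciSup_sum_exchange {c : Q → ℝ} (hc : ∀ q, 0 ≤ c q) (f : Q → ℕ → ℝ)
    (hmono : ∀ q, Monotone (f q)) (hbd : ∀ q n, f q n ≤ 1) :
    ⨆ n, ∑ q, c q * f q n = ∑ q, c q * ⨆ n, f q n := by
  have hbdd : ∀ q, BddAbove (Set.range (f q)) := fun q =>
    ⟨1, by rintro x ⟨n, rfl⟩; exact hbd q n⟩
  have h1 : ∀ q : Q, Filter.Tendsto (fun n => c q * f q n) Filter.atTop
      (nhds (c q * ⨆ n, f q n)) := fun q =>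
    (tendsto_atTop_ciSup (hmono q) (hbdd q)).const_mul (c q)
  have h2 : Filter.Tendsto (fun n => ∑ q, c q * f q n) Filter.atTop
      (nhds (∑ q, c q * ⨆ n, f q n)) :=
    tendsto_finset_sum _ fun q _ => h1 q
  have h3 : Monotone fun n => ∑ q, c q * f q n := by
    intro i j hij
    exact Finset.sum_le_sum fun q _ => mul_le_mul_of_nonneg_left (hmono q hij) (hc q)
  have h4 : BddAbove (Set.range fun n => ∑ q, c q * f q n) := by
    refine ⟨∑ q, c q, ?_⟩
    rintro x ⟨n, rfl⟩
    exact Finset.sum_le_sum fun q _ => by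
      calc c q * f q n ≤ c q * 1 := mul_le_mul_of_nonneg_left (hbd q n) (hc q)
        _ = c q := mul_one _
  exact tendsto_nhds_unique (tendsto_atTop_ciSup h3 h4) h2

lemma ciSup_succ_eq {f : ℕ → ℝ} (hmono : Monotone f) (hbd : BddAbove (Set.range f)) :
    ⨆ n, f (n + 1) = ⨆ n, f n := by
  have hbd' : BddAbove (Set.range fun n => f (n + 1)) := by
    obtain ⟨M, hM⟩ := hbd
    exact ⟨M, by rintro x ⟨k, rfl⟩; exact hM ⟨k + 1, rfl⟩⟩
  refine le_antisymm (ciSup_le fun n => le_ciSup hbd (n + 1)) (ciSup_le fun n => ?_)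
  exact (hmono (Nat.le_succ n)).trans (le_ciSup hbd' n)

/-- One-step decomposition of the reach probability. -/
lemma reach_rec (δ : Q → A → B → D) (dist : D → FDist Q) (T : Q)
    (sA : Strat Q A) (sB : Strat Q B) {q : Q} (hq : q ≠ T) :
    reach δ dist T sA sB q
      = ∑ q', step δ dist (sA [] q) (sB [] q) q q' *
          reach δ dist T (residual sA [q]) (residual sB [q]) q' := by
  have hstep : ∀ n, reachN δ dist T (n + 1) sA sB q
      = ∑ q', step δ dist (sA [] q) (sB [] q) q q' *
          reachN δ dist T n (residual sA [q]) (residual sB [q]) q' := by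
    intro n
    have : reachN δ dist T (n+1) sA sB q
        = ∑ q', step δ dist (sA [] q) (sB [] q) q q' *
            reachSetNAux δ dist {T} n sA sB [q] q' := by
      simp only [reachN, reachSetN, reachSetNAux]
      rw [if_neg (by simpa using hq)]
      rfl
    rw [this]
    refine Finset.sum_congr rfl fun q' _ => ?_
    congr 1
    have := reachSetNAux_shift δ dist {T} sA sB [q] n [] q'
    simpa [reachN, reachSetN] using this
  have : reach δ dist T sA sB q = ⨆ n, reachN δ dist T (n + 1) sA sB q :=
    (ciSup_succ_eq (reachN_monotone δ dist T sA sB q)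
      (bddAbove_reachN δ dist T sA sB q)).symm
  rw [this]
  simp only [hstep]
  exact ciSup_sum_exchange
    (fun q' => step_nonneg δ dist _ _ q q')
    (fun q' n => reachN δ dist T n (residual sA [q]) (residual sB [q]) q')
    (fun q' => reachN_monotone δ dist T _ _ q')
    (fun q' n => reachN_le_one δ dist T n _ _ q')

section Values

variable [Nonempty A] [Nonempty B]

lemma valA_le_reach (δ : Q → A → B → D) (dist : D → FDist Q) (T : Q)
    (sAs : Strat Q A) (sB : Strat Q B) (q : Q) :
    valA δ dist T sAs q ≤ reach δ dist T sAs sB q :=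
  ciInf_le ⟨0, by rintro x ⟨sB', rfl⟩; exact reach_nonneg δ dist T sAs sB' q⟩ sB

lemma le_valA {δ : Q → A → B → D} {dist : D → FDist Q} {T : Q}
    {sAs : Strat Q A} {q : Q} {c : ℝ}
    (h : ∀ sB, c ≤ reach δ dist T sAs sB q) : c ≤ valA δ dist T sAs q :=
  le_ciInf h

lemma valA_nonneg (δ : Q → A → B → D) (dist : D → FDist Q) (T : Q)
    (sAs : Strat Q A) (q : Q) : 0 ≤ valA δ dist T sAs q :=
  le_valA fun sB => reach_nonneg δ dist T sAs sB q

lemma valA_le_one (δ : Q → A → B → D) (dist : D → FDist Q) (T : Q)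
    (sAs : Strat Q A) (q : Q) : valA δ dist T sAs q ≤ 1 :=
  (valA_le_reach δ dist T sAs (Classical.arbitrary _) q).trans
    (reach_le_one δ dist T sAs _ q)

lemma valA_target (δ : Q → A → B → D) (dist : D → FDist Q) (T : Q)
    (sAs : Strat Q A) : valA δ dist T sAs T = 1 :=
  le_antisymm (valA_le_one δ dist T sAs T)
    (le_valA fun sB => (reach_target δ dist T sAs sB).symm.le)

lemma valA_le_value (δ : Q → A → B → D) (dist : D → FDist Q) (T : Q)
    (sAs : Strat Q A) (q : Q) : valA δ dist T sAs q ≤ value δ dist T q :=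
  le_ciSup (f := fun sAs : Strat Q A => valA δ dist T sAs q)
    ⟨1, by rintro x ⟨sAs', rfl⟩; exact valA_le_one δ dist T sAs' q⟩ sAs

lemma value_le {δ : Q → A → B → D} {dist : D → FDist Q} {T : Q} {q : Q} {c : ℝ}
    (h : ∀ sAs : Strat Q A, valA δ dist T sAs q ≤ c) : value δ dist T q ≤ c :=
  ciSup_le h

lemma value_nonneg (δ : Q → A → B → D) (dist : D → FDist Q) (T : Q) (q : Q) :
    0 ≤ value δ dist T q :=
  (valA_nonneg δ dist T (Classical.arbitrary _) q).trans
    (valA_le_value δ dist T _ q)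

lemma value_le_one (δ : Q → A → B → D) (dist : D → FDist Q) (T : Q) (q : Q) :
    value δ dist T q ≤ 1 := value_le fun sAs => valA_le_one δ dist T sAs q

lemma value_target (δ : Q → A → B → D) (dist : D → FDist Q) (T : Q) :
    value δ dist T T = 1 :=
  le_antisymm (value_le_one δ dist T T)
    ((valA_target δ dist T (Classical.arbitrary _)).symm.le.trans
      (valA_le_value δ dist T _ T))

variable [DecidableEq B]

lemma residual_ofPos (sA : Q → FDist A) (π : List Q) :
    residual (ofPos (X := A) (Q := Q) sA) π = ofPos sA := rfl

lemma sum_step_mul_B (δ : Q → A → B → D) (dist : D → FDist Q) (sA : Q → FDist A)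
    (σB : FDist B) (q : Q) (w : Q → ℝ) :
    ∑ q', step δ dist (sA q) σB q q' * w q'
      = ∑ b, σB.1 b * ∑ q', stepB δ dist sA q b q' * w q' := by
  simp only [step_eq_sum_stepB, Finset.sum_mul, Finset.mul_sum]
  rw [Finset.sum_comm]
  exact Finset.sum_congr rfl fun b _ => Finset.sum_congr rfl fun q' _ => by ring

/-- Local domination against pure Player B actions. -/
lemma dom_pure {δ : Q → A → B → D} {dist : D → FDist Q} {sA : Q → FDist A}
    {v : Q → ℝ} (hv : ∀ q, v q ∈ Set.Icc (0:ℝ) 1)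
    (hdom : LocallyDominates δ dist sA v) (q : Q) (b : B) :
    v q ≤ ∑ q', stepB δ dist sA q b q' * v q' := by
  have hpay : PayIcc fun a b => lift dist v (δ q a b) := fun a b => lift_mem_Icc dist hv _
  calc v q ≤ valStratGF (fun a b => lift dist v (δ q a b)) (sA q) := hdom q
    _ ≤ out (fun a b => lift dist v (δ q a b)) (sA q) (dirac b) :=
        valStratGF_le_out hpay (sA q) (dirac b)
    _ = ∑ q', stepB δ dist sA q b q' * v q' := (sum_stepB_mul δ dist sA q b v).symm

/-- The MDP value of the positional strategy `sA` is superharmonic for some action. -/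
lemma exists_bellman_ge (δ : Q → A → B → D) (dist : D → FDist Q) (T : Q)
    (sA : Q → FDist A) {q : Q} (hq : q ≠ T) :
    ∃ b : B, ∑ q', stepB δ dist sA q b q' * valA δ dist T (ofPos sA) q'
      ≤ valA δ dist T (ofPos sA) q := by
  set u := valA δ dist T (ofPos sA) with hu
  obtain ⟨b0, _, hb0⟩ := Finset.exists_min_image Finset.univ
    (fun b => ∑ q', stepB δ dist sA q b q' * u q')
    ⟨Classical.arbitrary B, Finset.mem_univ _⟩
  refine ⟨b0, le_valA fun sB => ?_⟩
  rw [reach_rec δ dist T _ sB hq]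
  have hres : residual (ofPos (X := A) (Q := Q) sA) [q] = ofPos sA := rfl
  rw [hres]
  have h1 : ∑ q', step δ dist (sA q) (sB [] q) q q' * u q'
      ≤ ∑ q', step δ dist (sA q) (sB [] q) q q' *
          reach δ dist T (ofPos sA) (residual sB [q]) q' := by
    refine Finset.sum_le_sum fun q' _ => ?_
    refine mul_le_mul_of_nonneg_left ?_ (step_nonneg δ dist _ _ q q')
    exact valA_le_reach δ dist T (ofPos sA) (residual sB [q]) q'
  refine le_trans ?_ h1
  rw [sum_step_mul_B δ dist sA (sB [] q) q u]
  calc ∑ q', stepB δ dist sA q b0 q' * u q'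
      = ∑ b, (sB [] q).1 b * ∑ q', stepB δ dist sA q b0 q' * u q' := by
        rw [← Finset.sum_mul, FDist.sum_one, one_mul]
    _ ≤ ∑ b, (sB [] q).1 b * ∑ q', stepB δ dist sA q b q' * u q' :=
        Finset.sum_le_sum fun b _ => mul_le_mul_of_nonneg_left
          (hb0 b (Finset.mem_univ b)) ((sB [] q).2.1 b)

end Values

section DP

variable [Nonempty A] [Nonempty B]

lemma value_mem_Icc (δ : Q → A → B → D) (dist : D → FDist Q) (T : Q) (q : Q) :
    value δ dist T q ∈ Set.Icc (0:ℝ) 1 :=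
  ⟨value_nonneg δ dist T q, value_le_one δ dist T q⟩

/-- The hard dynamic-programming direction: `Δ(value) ≤ value`. -/
lemma value_superfixed (δ : Q → A → B → D) (dist : D → FDist Q) (T : Q)
    {q : Q} (hq : q ≠ T) :
    valGF (fun a b => lift dist (value δ dist T) (δ q a b)) ≤ value δ dist T q := by
  set w := value δ dist T with hw
  have hwIcc : ∀ r, w r ∈ Set.Icc (0:ℝ) 1 := value_mem_Icc δ dist T
  have hpay : PayIcc fun a b => lift dist w (δ q a b) := fun a b => lift_mem_Icc dist hwIcc _
  refine le_of_forall_pos_le_add fun ε hε => ?_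
  have hε2 : 0 < ε / 2 := by linarith
  -- near-optimal local mixed action
  obtain ⟨σA, hσA⟩ : ∃ σA : FDist A,
      valGF (fun a b => lift dist w (δ q a b)) - ε / 2
        < valStratGF (fun a b => lift dist w (δ q a b)) σA := by
    refine exists_lt_of_lt_ciSup ?_
    have : valGF (fun a b => lift dist w (δ q a b)) - ε / 2
        < valGF (fun a b => lift dist w (δ q a b)) := by linarith
    exact this
  -- near-optimal continuation strategies
  have hcont : ∀ q' : Q, ∃ s : Strat Q A, w q' - ε / 2 < valA δ dist T s q' := by
    intro q'
    refine exists_lt_of_lt_ciSup ?_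
    have : w q' - ε / 2 < w q' := by linarith
    exact this
  choose sG hsG using hcont
  -- the glued strategy
  set glue : Strat Q A := fun h r =>
    match h with
    | [] => σA
    | _ :: t => sG (t.headD r) t r with hglue
  have hkey : ∀ sB : Strat Q B,
      valGF (fun a b => lift dist w (δ q a b)) - ε ≤ reach δ dist T glue sB q := by
    intro sB
    rw [reach_rec δ dist T glue sB hq]
    have hres : ∀ (q' : Q) (sB' : Strat Q B),
        reach δ dist T (residual glue [q]) sB' q' = reach δ dist T (sG q') sB' q' := by
      intro q' sB'
      unfold reach reachN reachSetN
      congr 1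
      funext n
      refine reachSetNAux_congr δ dist {T} n [] q' rfl rfl ?_ (fun _ _ => rfl)
      intro t r
      rfl
    have h1 : ∑ q', step δ dist (glue [] q) (sB [] q) q q' *
          reach δ dist T (residual glue [q]) (residual sB [q]) q'
        ≥ ∑ q', step δ dist σA (sB [] q) q q' * (w q' - ε / 2) := by
      refine Finset.sum_le_sum fun q' _ => ?_
      have hg : glue [] q = σA := rfl
      rw [hg, hres q' (residual sB [q])]
      refine mul_le_mul_of_nonneg_left ?_ (step_nonneg δ dist _ _ q q')
      exact le_trans (hsG q').le (valA_le_reach δ dist T (sG q') (residual sB [q]) q')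
    have h2 : ∑ q', step δ dist σA (sB [] q) q q' * (w q' - ε / 2)
        = ∑ q', step δ dist σA (sB [] q) q q' * w q' - ε / 2 := by
      have : ∑ q', step δ dist σA (sB [] q) q q' * (w q' - ε / 2)
          = ∑ q', (step δ dist σA (sB [] q) q q' * w q'
              - step δ dist σA (sB [] q) q q' * (ε / 2)) :=
        Finset.sum_congr rfl fun q' _ => by ring
      rw [this, Finset.sum_sub_distrib, ← Finset.sum_mul, step_sum_one, one_mul]
    have h3 : ∑ q', step δ dist σA (sB [] q) q q' * w q'
        = out (fun a b => lift dist w (δ q a b)) σA (sB [] q) :=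
      sum_step_mul δ dist σA (sB [] q) q w
    have h4 : valStratGF (fun a b => lift dist w (δ q a b)) σA
        ≤ out (fun a b => lift dist w (δ q a b)) σA (sB [] q) :=
      valStratGF_le_out hpay σA (sB [] q)
    have hg : glue [] q = σA := rfl
    rw [hg]
    linarith
  have : valGF (fun a b => lift dist w (δ q a b)) - ε ≤ valA δ dist T glue q :=
    le_valA hkey
  have := this.trans (valA_le_value δ dist T glue q)
  linarith

lemma vseq_mem_Icc (δ : Q → A → B → D) (dist : D → FDist Q) (T : Q) (n : ℕ) (q : Q) :
    vseq δ dist T n q ∈ Set.Icc (0:ℝ) 1 := by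
  induction n generalizing q with
  | zero => by_cases hq : q = T <;> simp [vseq, hq]
  | succ n ih =>
    by_cases hq : q = T
    · simp [vseq, Δop, hq]
    · have hpay : PayIcc fun a b => lift dist (vseq δ dist T n) (δ q a b) :=
        fun a b => lift_mem_Icc dist ih _
      simp only [vseq, Δop, hq, if_false]
      exact ⟨valGF_nonneg hpay, valGF_le_one hpay⟩

lemma Δop_le_add {δ : Q → A → B → D} {dist : D → FDist Q} {T : Q}
    {v v' : Q → ℝ} {c : ℝ} (hv : ∀ q, v q ∈ Set.Icc (0:ℝ) 1)
    (hv' : ∀ q, v' q ∈ Set.Icc (0:ℝ) 1) (hc : 0 ≤ c)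
    (h : ∀ q, v q ≤ v' q + c) (q : Q) :
    Δop δ dist T v q ≤ Δop δ dist T v' q + c := by
  by_cases hq : q = T
  · simp only [Δop, hq, if_true]; linarith
  · simp only [Δop, hq, if_false]
    exact valGF_le_valGF_add (fun a b => lift_mem_Icc dist hv _)
      (fun a b => lift_mem_Icc dist hv' _)
      (fun a b => lift_le_lift_add dist h _)

lemma vseq_succ_le (δ : Q → A → B → D) (dist : D → FDist Q) (T : Q) (n : ℕ) (q : Q) :
    vseq δ dist T n q ≤ vseq δ dist T (n + 1) q := by
  induction n generalizing q with
  | zero =>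
    by_cases hq : q = T
    · simp [vseq, Δop, hq]
    · have hpay : PayIcc fun a b => lift dist (vseq δ dist T 0) (δ q a b) :=
        fun a b => lift_mem_Icc dist (vseq_mem_Icc δ dist T 0) _
      simp only [vseq, Δop, hq, if_false]
      exact valGF_nonneg hpay
  | succ n ih =>
    have := Δop_le_add (δ := δ) (dist := dist) (T := T)
      (vseq_mem_Icc δ dist T n) (vseq_mem_Icc δ dist T (n + 1)) le_rfl
      (fun q => by simpa using ih q) q
    simpa [vseq] using this

lemma vseq_monotone (δ : Q → A → B → D) (dist : D → FDist Q) (T : Q) (q : Q) :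
    Monotone fun n => vseq δ dist T n q :=
  monotone_nat_of_le_succ fun n => vseq_succ_le δ dist T n q

lemma vseq_le_value (δ : Q → A → B → D) (dist : D → FDist Q) (T : Q) (n : ℕ) (q : Q) :
    vseq δ dist T n q ≤ value δ dist T q := by
  induction n generalizing q with
  | zero =>
    by_cases hq : q = T
    · simp [vseq, hq, value_target]
    · simp only [vseq, hq, if_false]
      exact value_nonneg δ dist T q
  | succ n ih =>
    by_cases hq : q = T
    · simp [vseq, Δop, hq, value_target]
    · simp only [vseq, Δop, hq, if_false]
      have h1 : valGF (fun a b => lift dist (vseq δ dist T n) (δ q a b))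
          ≤ valGF (fun a b => lift dist (value δ dist T) (δ q a b)) := by
        have := valGF_le_valGF_add (c := 0)
          (fun a b => lift_mem_Icc dist (vseq_mem_Icc δ dist T n) (δ q a b))
          (fun a b => lift_mem_Icc dist (value_mem_Icc δ dist T) (δ q a b))
          (fun a' b' => by
            have := lift_le_lift_add (c := 0) dist (v := vseq δ dist T n)
              (v' := value δ dist T) (fun r => by simpa using ih r) (δ q a' b')
            simpa using this)
        simpa using this
      exact h1.trans (value_superfixed δ dist T hq)

lemma vseq_target (δ : Q → A → B → D) (dist : D → FDist Q) (T : Q) (n : ℕ) :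
    vseq δ dist T n T = 1 := by
  cases n with
  | zero => simp [vseq]
  | succ n => simp [vseq, Δop]

/-- The limit of value iteration is a fixed point of Δ, hence `m ≤ value`. -/
lemma m_le_value (δ : Q → A → B → D) (dist : D → FDist Q) (T : Q)
    (m : Q → ℝ) (hm : IsLfpDelta δ dist T m) (q : Q) :
    m q ≤ value δ dist T q := by
  set w : Q → ℝ := fun q => ⨆ n, vseq δ dist T n q with hwdef
  have hbdd : ∀ r, BddAbove (Set.range fun n => vseq δ dist T n r) := fun r =>
    ⟨1, by rintro x ⟨n, rfl⟩; exact (vseq_mem_Icc δ dist T n r).2⟩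
  have hle : ∀ n r, vseq δ dist T n r ≤ w r := fun n r => le_ciSup (hbdd r) n
  have hwIcc : ∀ r, w r ∈ Set.Icc (0:ℝ) 1 := by
    intro r
    constructor
    · exact le_trans (vseq_mem_Icc δ dist T 0 r).1 (hle 0 r)
    · exact ciSup_le fun n => (vseq_mem_Icc δ dist T n r).2
  have hwT : w T = 1 := by
    refine le_antisymm (hwIcc T).2 ?_
    rw [← vseq_target δ dist T 0]
    exact hle 0 T
  have hfix : Δop δ dist T w = w := by
    funext r
    by_cases hr : r = T
    · simp [Δop, hr, hwT]
    · refine le_antisymm ?_ ?_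
      · -- Δ w r ≤ w r via ε-approximation
        refine le_of_forall_pos_le_add fun ε hε => ?_
        have hex : ∀ x : Q, ∃ n : ℕ, w x - ε < vseq δ dist T n x := by
          intro x
          refine exists_lt_of_lt_ciSup ?_
          have : w x - ε < w x := by linarith
          exact this
        choose nf hnf using hex
        set N := Finset.univ.sup nf with hN
        have hwN : ∀ x, w x ≤ vseq δ dist T N x + ε := by
          intro x
          have h1 : vseq δ dist T (nf x) x ≤ vseq δ dist T N x :=
            vseq_monotone δ dist T x (Finset.le_sup (Finset.mem_univ x))
          have := hnf x
          linarith
        have := Δop_le_add (δ := δ) (dist := dist) (T := T)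
          hwIcc (vseq_mem_Icc δ dist T N) hε.le hwN r
        have h2 : Δop δ dist T (vseq δ dist T N) r = vseq δ dist T (N + 1) r := rfl
        rw [h2] at this
        exact this.trans (by linarith [hle (N + 1) r])
      · -- w r ≤ Δ w r
        refine ciSup_le fun n => ?_
        have h1 : vseq δ dist T n r ≤ vseq δ dist T (n + 1) r := vseq_succ_le δ dist T n r
        have h2 : vseq δ dist T (n + 1) r = Δop δ dist T (vseq δ dist T n) r := rfl
        have h3 := Δop_le_add (δ := δ) (dist := dist) (T := T)
          (vseq_mem_Icc δ dist T n) hwIcc le_rfl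
          (fun x => by simpa using hle n x) r
        simp only [add_zero] at h3
        linarith
  have hmw : m q ≤ w q := hm.2.2 w hwIcc hfix q
  exact hmw.trans (ciSup_le fun n => vseq_le_value δ dist T n q)

end DP

end CRG


/-- a positional Player A strategy locally dominating `v ⪯ m` whose end
components (other than the target) only contain states of value 0 guarantees `v`. -/
theorem stmt3
    {A B Q D : Type} [Fintype A] [Fintype B] [Fintype Q] [Fintype D]
    [Nonempty A] [Nonempty B] [Nonempty Q] [Nonempty D] [DecidableEq Q] [DecidableEq B]
    (δ : Q → A → B → D) (dist : D → FDist Q) (T : Q)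
    (habs : CRG.Absorbing δ dist T)
    (m : Q → ℝ) (hm : CRG.IsLfpDelta δ dist T m)
    (v : Q → ℝ) (hv : ∀ q, v q ∈ Set.Icc (0:ℝ) 1) (hvm : ∀ q, v q ≤ m q)
    (sA : Q → FDist A) (hdom : CRG.LocallyDominates δ dist sA v)
    (hEC : ∀ H : CRG.EndComp δ dist sA, H.states ≠ {T} →
      ∀ q ∈ H.states, CRG.value δ dist T q = 0) :
    ∀ q : Q, v q ≤ CRG.valA δ dist T (CRG.ofPos sA) q := by
  classical
  open CRG in
  by_contra hcon
  push_neg at hcon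
  obtain ⟨q1, hq1⟩ := hcon
  set u : Q → ℝ := fun q => CRG.valA δ dist T (CRG.ofPos sA) q with hudef
  -- maximal defect
  obtain ⟨q0, _, hq0⟩ := Finset.exists_max_image Finset.univ (fun q => v q - u q)
    ⟨Classical.arbitrary Q, Finset.mem_univ _⟩
  set c : ℝ := v q0 - u q0 with hcdef
  have hc : 0 < c := by
    have := hq0 q1 (Finset.mem_univ q1)
    have : v q1 - u q1 ≤ c := this
    have h2 : 0 < v q1 - u q1 := by simp only [hudef]; linarith
    linarith
  set M : Set Q := {q | v q - u q = c} with hMdef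
  have hq0M : q0 ∈ M := rfl
  have hmax : ∀ q, v q - u q ≤ c := fun q => hq0 q (Finset.mem_univ q)
  have hTM : T ∉ M := by
    intro hT
    have h1 : u T = 1 := CRG.valA_target δ dist T (CRG.ofPos sA)
    have h2 : v T - u T = c := hT
    have := (hv T).2
    rw [h1] at h2
    linarith
  have hMT : ∀ q ∈ M, q ≠ T := fun q hq hqT => hTM (hqT ▸ hq)
  -- choice of superharmonic actions
  have hsel : ∀ q : Q, ∃ b : B, q ∈ M →
      ∑ q', CRG.stepB δ dist sA q b q' * u q' ≤ u q := by
    intro q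
    by_cases hq : q ∈ M
    · obtain ⟨b, hb⟩ := CRG.exists_bellman_ge δ dist T sA (hMT q hq)
      exact ⟨b, fun _ => hb⟩
    · exact ⟨Classical.arbitrary B, fun h => absurd h hq⟩
  choose bsel hbsel using hsel
  -- M is closed under the selected actions
  have hclose : ∀ q ∈ M, ∀ q', CRG.stepB δ dist sA q (bsel q) q' ≠ 0 → q' ∈ M := by
    intro q hqM q' hne
    have hvq : v q ≤ ∑ q', CRG.stepB δ dist sA q (bsel q) q' * v q' :=
      CRG.dom_pure hv hdom q (bsel q)
    have huq : ∑ q', CRG.stepB δ dist sA q (bsel q) q' * u q' ≤ u q := hbsel q hqM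
    have hterm : ∀ x ∈ Finset.univ (α := Q),
        0 ≤ CRG.stepB δ dist sA q (bsel q) x * (c - (v x - u x)) := fun x _ =>
      mul_nonneg (CRG.stepB_nonneg δ dist sA q (bsel q) x) (by linarith [hmax x])
    have hexpand : ∀ x : Q, CRG.stepB δ dist sA q (bsel q) x * (c - (v x - u x))
        = CRG.stepB δ dist sA q (bsel q) x * c
          - CRG.stepB δ dist sA q (bsel q) x * v x
          + CRG.stepB δ dist sA q (bsel q) x * u x := fun x => by ring
    have hsum : ∑ x, CRG.stepB δ dist sA q (bsel q) x * (c - (v x - u x))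
        = c - (∑ x, CRG.stepB δ dist sA q (bsel q) x * v x)
          + ∑ x, CRG.stepB δ dist sA q (bsel q) x * u x := by
      simp only [hexpand]
      rw [Finset.sum_add_distrib, Finset.sum_sub_distrib, ← Finset.sum_mul,
        CRG.stepB_sum_one, one_mul]
    have hqMc : v q - u q = c := hqM
    have hsumle : ∑ x, CRG.stepB δ dist sA q (bsel q) x * (c - (v x - u x)) ≤ 0 := by
      rw [hsum]; linarith
    have hsum0 : ∑ x, CRG.stepB δ dist sA q (bsel q) x * (c - (v x - u x)) = 0 :=
      le_antisymm hsumle (Finset.sum_nonneg hterm)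
    have hall := (Finset.sum_eq_zero_iff_of_nonneg hterm).1 hsum0 q' (Finset.mem_univ q')
    have hpos : 0 < CRG.stepB δ dist sA q (bsel q) q' :=
      lt_of_le_of_ne (CRG.stepB_nonneg δ dist sA q (bsel q) q') (Ne.symm hne)
    have : c - (v q' - u q') = 0 := by
      rcases mul_eq_zero.1 hall with h | h
      · exact absurd h hpos.ne'
      · exact h
    show v q' - u q' = c
    linarith
  -- transition relation of the sub-MDP
  set R : Q → Q → Prop := fun x y => x ∈ M ∧ CRG.stepB δ dist sA x (bsel x) y ≠ 0
    with hRdef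
  set Rs : Q → Set Q := fun x => {y | Relation.ReflTransGen R x y} with hRsdef
  have hRs_self : ∀ x, x ∈ Rs x := fun x => Relation.ReflTransGen.refl
  have hRsM : ∀ x ∈ M, ∀ y ∈ Rs x, y ∈ M := by
    intro x hx y hy
    induction hy with
    | refl => exact hx
    | tail _ hstep _ => exact hclose _ hstep.1 _ hstep.2
  have hRs_trans : ∀ x y, y ∈ Rs x → Rs y ⊆ Rs x := by
    intro x y hxy z hz
    exact Relation.ReflTransGen.trans hxy hz
  -- minimal reachability class
  obtain ⟨y, hyRs0, hymin⟩ := Finset.exists_min_image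
    ((Set.toFinite (Rs q0)).toFinset) (fun x => (Rs x).ncard)
    ⟨q0, by rw [Set.Finite.mem_toFinset]; exact hRs_self q0⟩
  rw [Set.Finite.mem_toFinset] at hyRs0
  have hyM : y ∈ M := hRsM q0 hq0M y hyRs0
  have hStatesM : Rs y ⊆ M := fun z hz => hRsM y hyM z hz
  have hRs_eq : ∀ z ∈ Rs y, Rs z = Rs y := by
    intro z hz
    have h1 : Rs z ⊆ Rs y := hRs_trans y z hz
    have h2 : z ∈ Rs q0 := hRs_trans q0 y hyRs0 hz
    have h3 : (Rs y).ncard ≤ (Rs z).ncard :=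
      hymin z (by rw [Set.Finite.mem_toFinset]; exact h2)
    exact Set.eq_of_subset_of_ncard_le h1 h3 (Set.toFinite _)
  -- build the end component
  have hconv : ∀ z ∈ Rs y, ∀ w, Relation.ReflTransGen R z w →
      Relation.ReflTransGen
        (fun x y' => x ∈ Rs y ∧ ∃ b ∈ ({bsel x} : Set B),
          CRG.stepB δ dist sA x b y' ≠ 0) z w := by
    intro z hz w hw
    induction hw with
    | refl => exact Relation.ReflTransGen.refl
    | tail hzb hstep ih =>
      refine Relation.ReflTransGen.tail ih ?_
      refine ⟨?_, bsel _, rfl, hstep.2⟩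
      exact hRs_trans y z hz (Relation.ReflTransGen.trans (hRs_self z) hzb)
  set H : CRG.EndComp δ dist sA := {
    states := Rs y
    acts := fun q => {bsel q}
    acts_nonempty := fun q _ => ⟨bsel q, rfl⟩
    closed := by
      intro q hq b hb q' hne
      have hbq : b = bsel q := hb
      rw [hbq] at hne
      exact Relation.ReflTransGen.tail hq ⟨hStatesM hq, hne⟩
    connected := by
      intro q hq q' hq'
      have hyRq : y ∈ Rs q := by rw [hRs_eq q hq]; exact hRs_self y
      have h1 : Relation.ReflTransGen R q q' := Relation.ReflTransGen.trans hyRq hq'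
      exact hconv q hq q' h1 } with hHdef
  have hHne : H.states ≠ {T} := by
    intro heq
    have : y ∈ H.states := hRs_self y
    rw [heq] at this
    exact hTM (this ▸ hyM)
  have hval0 : CRG.value δ dist T y = 0 := hEC H hHne y (hRs_self y)
  have hu0 : u y = 0 := by
    have h1 : u y ≤ CRG.value δ dist T y := CRG.valA_le_value δ dist T (CRG.ofPos sA) y
    have h2 : 0 ≤ u y := CRG.valA_nonneg δ dist T (CRG.ofPos sA) y
    rw [hval0] at h1
    linarith
  have hv0 : v y = 0 := by
    have h1 : v y ≤ m y := hvm y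
    have h2 : m y ≤ CRG.value δ dist T y := CRG.m_le_value δ dist T m hm y
    have h3 : 0 ≤ v y := (hv y).1
    rw [hval0] at h2
    linarith
  have : v y - u y = c := hyM
  rw [hv0, hu0] at this
  linarith
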